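/- There are infinitely many (pairwise non-isomorphic) graphs G with α*(G) > max(α(G), |V(G)|/2). -/

import Mathlib

open Finset

/-- A fractional independence weighting of a graph. -/
def IsFIW {V : Type*} (G : SimpleGraph V) (φ : V → ℝ) : Prop :=
  (∀ v, 0 ≤ φ v ∧ φ v ≤ 1) ∧ ∀ u w, G.Adj u w → φ u + φ w ≤ 1

/-- The fractional independence number of a graph. -/
noncomputable def fracIndepNum {V : Type*} [Fintype V] (G : SimpleGraph V) : ℝ :=
  sSup {s : ℝ | ∃ φ : V → ℝ, IsFIW G φ ∧ s = ∑ v, φ v}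

/-- An independent set of a graph. -/
def IsIndepSet {V : Type*} (G : SimpleGraph V) (s : Set V) : Prop :=
  s.Pairwise fun u w => ¬ G.Adj u w

/-- The independence number of a graph. -/
noncomputable def indepNum {V : Type*} [Fintype V] (G : SimpleGraph V) : ℕ :=
  sSup {n : ℕ | ∃ s : Finset V, IsIndepSet G ↑s ∧ s.card = n}

def myG (m : ℕ) : SimpleGraph (Fin m) :=
  SimpleGraph.fromRel (fun x y =>
    (x.val ≤ 1 ∧ y.val = 2) ∨ (x.val = 2 ∧ y.val = 3) ∨ (3 ≤ x.val ∧ 3 ≤ y.val))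

noncomputable def phi (m : ℕ) (v : Fin m) : ℝ :=
  if v.val ≤ 1 then 1 else if v.val = 2 then 0 else 1/2

lemma phi_fiw (m : ℕ) : IsFIW (myG m) (phi m) := by
  constructor
  · intro v
    unfold phi
    split_ifs <;> norm_num
  · intro u w h
    rw [myG, SimpleGraph.fromRel_adj] at h
    obtain ⟨hne, h⟩ := h
    unfold phi
    rcases h with (⟨h1, h2⟩ | ⟨h1, h2⟩ | ⟨h1, h2⟩) | (⟨h1, h2⟩ | ⟨h1, h2⟩ | ⟨h1, h2⟩) <;>
      split_ifs <;> (try norm_num) <;> omega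

lemma sum_phi (n : ℕ) : ∑ v : Fin (n+6), phi (n+6) v = (n : ℝ)/2 + 7/2 := by
  have hcong : ∀ v ∈ (univ : Finset (Fin (n+6))),
      phi (n+6) v = 1/2 + (phi (n+6) v - 1/2) := by intro v _; ring
  rw [Finset.sum_congr rfl hcong, Finset.sum_add_distrib, Finset.sum_const,
    Finset.card_univ, Fintype.card_fin]
  have h0 : (0:ℕ) < n+6 := by omega
  have h1 : (1:ℕ) < n+6 := by omega
  have h2 : (2:ℕ) < n+6 := by omega
  have hsub : ∑ v : Fin (n+6), (phi (n+6) v - 1/2)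
      = ∑ v ∈ ({⟨0,h0⟩, ⟨1,h1⟩, ⟨2,h2⟩} : Finset (Fin (n+6))), (phi (n+6) v - 1/2) := by
    refine (Finset.sum_subset (Finset.subset_univ _) ?_).symm
    intro x _ hx
    simp only [Finset.mem_insert, Finset.mem_singleton] at hx
    push_neg at hx
    obtain ⟨hx0, hx1, hx2⟩ := hx
    have : ¬ x.val ≤ 1 ∧ x.val ≠ 2 := by
      constructor
      · intro hle
        interval_cases h : x.val
        · exact hx0 (Fin.ext (by simpa using h))
        · exact hx1 (Fin.ext (by simpa using h))
      · intro he
        exact hx2 (Fin.ext (by simpa using he))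
    unfold phi
    rw [if_neg this.1, if_neg this.2]
    ring
  rw [hsub]
  rw [Finset.sum_insert (by simp [Fin.ext_iff]), Finset.sum_insert (by simp [Fin.ext_iff]),
    Finset.sum_singleton]
  have e0 : phi (n+6) ⟨0, h0⟩ = 1 := by simp [phi]
  have e1 : phi (n+6) ⟨1, h1⟩ = 1 := by simp [phi]
  have e2 : phi (n+6) ⟨2, h2⟩ = 0 := by simp [phi]
  rw [e0, e1, e2]
  ring

lemma indep_le (m : ℕ) (s : Finset (Fin m)) (hs : IsIndepSet (myG m) ↑s) : s.card ≤ 3 := by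
  classical
  have hsplit := Finset.card_filter_add_card_filter_not
    (s := s) (p := fun v : Fin m => v.val < 3)
  have hB : (s.filter (fun v : Fin m => ¬ v.val < 3)).card ≤ 1 := by
    rw [Finset.card_le_one]
    intro a ha b hb
    simp only [Finset.mem_filter] at ha hb
    by_contra hne
    refine hs (by simpa using ha.1) (by simpa using hb.1) hne ?_
    rw [myG, SimpleGraph.fromRel_adj]
    exact ⟨hne, Or.inl (Or.inr (Or.inr ⟨by omega, by omega⟩))⟩
  by_cases h2 : ∃ v ∈ s, v.val = 2
  · obtain ⟨v, hv, hv2⟩ := h2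
    have hA : s.filter (fun v : Fin m => v.val < 3) ⊆ {v} := by
      intro x hx
      simp only [Finset.mem_filter] at hx
      simp only [Finset.mem_singleton]
      by_cases hle : x.val ≤ 1
      · exfalso
        have hne : x ≠ v := by intro h; rw [h] at hle; omega
        refine hs (by simpa using hx.1) (by simpa using hv) hne ?_
        rw [myG, SimpleGraph.fromRel_adj]
        exact ⟨hne, Or.inl (Or.inl ⟨hle, hv2⟩)⟩
      · exact Fin.ext (by omega)
    have := Finset.card_le_card hA
    simp only [Finset.card_singleton] at this
    omega
  · push_neg at h2
    have hA : (s.filter (fun v : Fin m => v.val < 3)).card ≤ 2 := by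
      have := Finset.card_le_card_of_injOn
        (s := s.filter (fun v : Fin m => v.val < 3)) (t := Finset.range 2)
        (fun x : Fin m => x.val) ?_ ?_
      · simpa using this
      · intro x hx
        simp only [Finset.mem_coe, Finset.mem_filter] at hx
        have := h2 x hx.1
        simp only [Finset.mem_coe, Finset.mem_range]
        omega
      · intro a _ b _ hab
        exact Fin.ext hab
    omega

/-- There are infinitely many (pairwise non-isomorphic, since of unboundedly many orders)
graphs `G` with `α*(G) > max (α(G), |V(G)|/2)`. -/
theorem stmt_6 : ∀ n : ℕ, ∃ (m : ℕ) (G : SimpleGraph (Fin m)),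
    n < m ∧ fracIndepNum G > max ((indepNum G : ℝ)) ((m : ℝ) / 2) := by
  intro n
  refine ⟨n + 6, myG (n+6), by omega, ?_⟩
  have hset : ((n:ℝ)/2 + 7/2) ∈
      {s : ℝ | ∃ φ : Fin (n+6) → ℝ, IsFIW (myG (n+6)) φ ∧ s = ∑ v, φ v} :=
    ⟨phi (n+6), phi_fiw (n+6), (sum_phi n).symm⟩
  have hbdd : BddAbove {s : ℝ | ∃ φ : Fin (n+6) → ℝ, IsFIW (myG (n+6)) φ ∧ s = ∑ v, φ v} := by
    refine ⟨(n+6 : ℝ), ?_⟩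
    rintro x ⟨φ, hφ, rfl⟩
    calc ∑ v, φ v ≤ ∑ v : Fin (n+6), (1:ℝ) := Finset.sum_le_sum (fun v _ => (hφ.1 v).2)
      _ = (n+6 : ℝ) := by simp
  have hge : (n:ℝ)/2 + 7/2 ≤ fracIndepNum (myG (n+6)) := le_csSup hbdd hset
  have hind : indepNum (myG (n+6)) ≤ 3 := by
    refine csSup_le ⟨0, ∅, ?_, by simp⟩ ?_
    · simp [IsIndepSet]
    rintro k ⟨s, hs, rfl⟩
    exact indep_le _ s hs
  rw [gt_iff_lt, max_lt_iff]
  constructor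
  · have h3 : (indepNum (myG (n+6)) : ℝ) ≤ 3 := by exact_mod_cast hind
    have hn : (0:ℝ) ≤ (n:ℝ) := Nat.cast_nonneg n
    linarith
  · push_cast
    have hn : (0:ℝ) ≤ (n:ℝ) := Nat.cast_nonneg n
    linarith
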